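/- Let G be a finite group acting on a commutative ring R by ring automorphisms. Suppose for each subgroup H ≤ G we are given a multiplicative submonoid S_H ⊆ R^H such that S_G ⊆ S_H for all H and such that each S_H is closed under the norms: for K ≤ H and a ∈ S_K, the norm ∏_{hK ∈ H/K} h·a lies in S_H. Then for every H ≤ G and a ∈ S_H there exists r ∈ R^H with r·a ∈ S_G. (Norm-closure implies torsion-extension.) -/

import Mathlib

/-- Norm-closure implies torsion-extension: if the system of multiplicative
subsets `S_H ⊆ R^H` satisfies `S_G ⊆ S_H` and is closed under norms
`N^H_K(a) = ∏_{hK ∈ H/K} h • a`, then every `a ∈ S_H` divides (in `R^H`) an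
element of `S_G`. -/
theorem stmt10 {G R : Type*} [Group G] [Finite G] [CommRing R]
    [MulSemiringAction G R]
    (S : Subgroup G → Submonoid R)
    (hfix : ∀ H : Subgroup G, ∀ a ∈ S H, ∀ h ∈ H, h • a = a)
    (hres : ∀ H : Subgroup G, S ⊤ ≤ S H)
    (hnorm : ∀ K H : Subgroup G, K ≤ H → ∀ a ∈ S K,
      ∀ s : H ⧸ K.subgroupOf H → H,
        (∀ x : H ⧸ K.subgroupOf H, QuotientGroup.mk (s x) = x) →
        (∏ᶠ x : H ⧸ K.subgroupOf H, (s x : G) • a) ∈ S H) :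
    ∀ H : Subgroup G, ∀ a ∈ S H,
      ∃ r : R, (∀ h ∈ H, h • r = r) ∧ r * a ∈ S ⊤ := by
  classical
  intro H a ha
  set K := H.subgroupOf (⊤ : Subgroup G) with hK
  letI : Fintype ((⊤ : Subgroup G) ⧸ K) := Fintype.ofFinite _
  set s : ((⊤ : Subgroup G) ⧸ K) → (⊤ : Subgroup G) := fun x => x.out with hs
  have hsec : ∀ x, QuotientGroup.mk (s x) = x := fun x => Quotient.out_eq' x
  have hN : (∏ᶠ x : (⊤ : Subgroup G) ⧸ K, (s x : G) • a) ∈ S ⊤ :=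
    hnorm H ⊤ le_top a ha s hsec
  have hkey : ∀ (g : (⊤ : Subgroup G)) (x : (⊤ : Subgroup G) ⧸ K),
      (QuotientGroup.mk g : (⊤ : Subgroup G) ⧸ K) = x → (g : G) • a = (s x : G) • a := by
    intro g x hx
    have h1 : (QuotientGroup.mk g : (⊤ : Subgroup G) ⧸ K) = QuotientGroup.mk (s x) := by
      rw [hx, hsec]
    have h2 : ((s x)⁻¹ * g : (⊤ : Subgroup G)) ∈ K := (QuotientGroup.eq).mp h1.symm
    have h3 : (((s x) : G)⁻¹ * (g : G)) ∈ H := h2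
    have h4 : (g : G) = (s x : G) * (((s x) : G)⁻¹ * (g : G)) := by group
    rw [h4, mul_smul, hfix H a ha _ h3]
  set f : ((⊤ : Subgroup G) ⧸ K) → R := fun x => (s x : G) • a with hf
  set x0 : (⊤ : Subgroup G) ⧸ K := QuotientGroup.mk 1 with hx0
  have hfx0 : f x0 = a := by
    have := hkey 1 x0 rfl
    simpa using this.symm
  refine ⟨∏ i ∈ Finset.univ.erase x0, f i, ?_, ?_⟩
  · intro h hh
    set e : Equiv.Perm ((⊤ : Subgroup G) ⧸ K) :=
      MulAction.toPerm (⟨h, trivial⟩ : (⊤ : Subgroup G)) with he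
    have hex0 : e x0 = x0 := by
      show (⟨h, trivial⟩ : (⊤ : Subgroup G)) • x0 = x0
      rw [hx0, MulAction.Quotient.smul_mk]
      refine (QuotientGroup.eq).mpr ?_
      simp [hK, Subgroup.mem_subgroupOf, smul_eq_mul, inv_mem hh, hh]
    have hcomm : ∀ i, h • f i = f (e i) := by
      intro i
      have h1 : (QuotientGroup.mk ((⟨h, trivial⟩ : (⊤ : Subgroup G)) * s i) :
          (⊤ : Subgroup G) ⧸ K) = e i := by
        have h2 : e i = (⟨h, trivial⟩ : (⊤ : Subgroup G)) • i := rfl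
        rw [h2]
        conv_rhs => rw [← hsec i]
        rw [MulAction.Quotient.smul_mk, smul_eq_mul]
      have := hkey _ _ h1
      simp only [Submonoid.coe_mul, Subgroup.coe_mul, mul_smul] at this
      simpa [hf] using this
    have hmap : h • (∏ i ∈ Finset.univ.erase x0, f i)
        = ∏ i ∈ Finset.univ.erase x0, h • f i :=
      map_prod (MulSemiringAction.toRingHom G R h) f _
    rw [hmap]
    calc ∏ i ∈ Finset.univ.erase x0, h • f i
        = ∏ i ∈ Finset.univ.erase x0, f (e i) :=
          Finset.prod_congr rfl fun i _ => hcomm i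
      _ = ∏ i ∈ Finset.univ.erase x0, f i := by
          refine Finset.prod_nbij' e e.symm ?_ ?_ ?_ ?_ ?_
          · intro i hi
            simp only [Finset.mem_erase, Finset.mem_univ, and_true] at hi ⊢
            intro hcon; exact hi (by rw [← hex0] at hcon; exact e.injective hcon)
          · intro i hi
            simp only [Finset.mem_erase, Finset.mem_univ, and_true] at hi ⊢
            intro hcon
            exact hi (by rw [← hex0, ← hcon, Equiv.apply_symm_apply])
          · intro i _; simp
          · intro i _; simp
          · intro i _; rfl
  · have hprod : (∏ i ∈ Finset.univ.erase x0, f i) * a = ∏ᶠ x, f x := by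
      rw [finprod_eq_prod_of_fintype, ← hfx0, mul_comm,
        Finset.mul_prod_erase _ f (Finset.mem_univ x0)]
    rw [hprod]; exact hN
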